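/- On a Sasakian 3-manifold immersed in the complex space form M_ℂ²(c) of constant holomorphic sectional curvature 4c (c ≠ 0), with shape operator E satisfying the Codazzi equation d^∇E(X,Y) = c(η(X)𝔛Y − η(Y)𝔛X − 2g(𝔛X,Y)ξ) and E = Id + (f−1)η(·)ξ, one has f = 1 − c; hence EX = X − c η(X)ξ and the mean curvature H = (1/3) tr E equals (3−c)/3, which is constant. -/

import Mathlib

/-- on a Sasakian 3-manifold immersed in `M_ℂ²(c)` (`c ≠ 0`), if the shape
operator `E = Id + (f−1)η(·)ξ` satisfies the Codazzi equation
`d^∇E(X,Y) = c(η(X)𝔛Y − η(Y)𝔛X − 2g(𝔛X,Y)ξ)`, then `f = 1 − c`; hence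
`EX = X − c η(X)ξ` and `tr E = 3 − c`, i.e. the mean curvature `H = (3−c)/3` is constant.
(Algebraic model: `A` = functions, `V` = vector fields; `{e₁, e₂ = 𝔛e₁, ξ}` an
orthonormal frame.) -/
theorem stmt_7
    {A : Type*} [CommRing A] [Algebra ℝ A]
    {V : Type*} [AddCommGroup V] [Module A V]
    (g : V →ₗ[A] V →ₗ[A] A)
    (Dv : V → A → A)
    (nabla : V → V → V)
    (Xm : V →ₗ[A] V) (ξ : V) (η : V →ₗ[A] A)
    (c : ℝ) (hc : c ≠ 0)
    -- the Levi-Civita connection: additivity, Leibniz rule, metric compatibility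
    (hadd : ∀ X Y Z : V, nabla X (Y + Z) = nabla X Y + nabla X Z)
    (hleib : ∀ (X Y : V) (a : A), nabla X (a • Y) = Dv X a • Y + a • nabla X Y)
    (hmetric : ∀ X Y Z : V, Dv X (g Y Z) = g (nabla X Y) Z + g Y (nabla X Z))
    -- almost contact metric structure
    (hgsym : ∀ X Y : V, g X Y = g Y X)
    (hXm2 : ∀ X : V, Xm (Xm X) = -X + η X • ξ)
    (hgξ : g ξ ξ = 1)
    (hXmξ : Xm ξ = 0)
    (hη : ∀ X : V, η X = g ξ X)
    (hcomp : ∀ X Y : V, g (Xm X) (Xm Y) = g X Y - η X * η Y)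
    -- Sasakian conditions
    (hnablaξ : ∀ X : V, nabla X ξ = Xm X)
    (hnablaXm : ∀ X Y : V, nabla X (Xm Y) - Xm (nabla X Y) = η Y • X - g X Y • ξ)
    -- a horizontal unit vector field e₁
    (e₁ : V) (he₁ : g e₁ e₁ = 1) (hηe₁ : η e₁ = 0)
    -- the shape operator E = Id + (f−1)η(·)ξ satisfying the Codazzi equation
    (f : A) (E : V → V)
    (hE : ∀ X : V, E X = X + ((f - 1) * η X) • ξ)
    (hCodazzi : ∀ X Y : V,
      (nabla X (E Y) - E (nabla X Y)) - (nabla Y (E X) - E (nabla Y X)) =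
        algebraMap ℝ A c •
          (η X • Xm Y - η Y • Xm X - (2 : A) • (g (Xm X) Y • ξ))) :
    f = algebraMap ℝ A (1 - c) ∧
    (∀ X : V, E X = X - (algebraMap ℝ A c * η X) • ξ) ∧
    g (E e₁) e₁ + g (E (Xm e₁)) (Xm e₁) + g (E ξ) ξ = algebraMap ℝ A (3 - c) := by
  set c' := algebraMap ℝ A c with hc'
  have hηξ : η ξ = 1 := by rw [hη, hgξ]
  have hzero : ∀ X : V, nabla X (0:V) = 0 := by
    intro X
    have h := hadd X 0 0
    rw [add_zero] at h
    exact (left_eq_add.mp h)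
  have hDv1 : ∀ X : V, Dv X (1:A) = 0 := by
    intro X
    have h := hleib X ξ 1
    rw [one_smul, one_smul, right_eq_add] at h
    have h2 : g (Dv X (1:A) • ξ) ξ = 0 := by rw [h]; simp
    rwa [map_smul, LinearMap.smul_apply, hgξ, smul_eq_mul, mul_one] at h2
  have hDv0 : ∀ X : V, Dv X (0:A) = 0 := by
    intro X
    have h := hleib X ξ 0
    rw [zero_smul, zero_smul, hzero, add_zero] at h
    have h2 : g (Dv X (0:A) • ξ) ξ = 0 := by rw [← h]; simp
    rwa [map_smul, LinearMap.smul_apply, hgξ, smul_eq_mul, mul_one] at h2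
  have hXmη : ∀ X : V, g (Xm X) ξ = 0 := by
    intro X
    have h := hmetric X ξ ξ
    rw [hgξ, hDv1, hnablaξ, hgsym ξ (Xm X)] at h
    have h2 : g (Xm X) ξ + g (Xm X) ξ = 0 := h.symm
    have h3 : (1/2 : ℝ) • (g (Xm X) ξ + g (Xm X) ξ) = g (Xm X) ξ := by
      rw [smul_add, ← add_smul]; norm_num
    rw [h2, smul_zero] at h3
    exact h3.symm
  have hηXm : ∀ X : V, η (Xm X) = 0 := by
    intro X; rw [hη, hgsym]; exact hXmη X
  have hηnξe : η (nabla ξ e₁) = 0 := by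
    have h := hmetric ξ ξ e₁
    have hge : g ξ e₁ = 0 := by rw [← hη]; exact hηe₁
    rw [hge, hDv0, hnablaξ, hXmξ, map_zero, LinearMap.zero_apply, zero_add] at h
    rw [hη]; exact h.symm
  -- E on special vectors
  have hEξ : E ξ = f • ξ := by
    rw [hE, hηξ, mul_one, sub_smul, one_smul]; abel
  have hEe₁ : E e₁ = e₁ := by
    rw [hE, hηe₁, mul_zero, zero_smul, add_zero]
  have hEXme₁ : E (Xm e₁) = Xm e₁ := by
    rw [hE, hηXm, mul_zero, zero_smul, add_zero]
  have hEnξe : E (nabla ξ e₁) = nabla ξ e₁ := by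
    rw [hE, hηnξe, mul_zero, zero_smul, add_zero]
  -- the Codazzi equation at (e₁, ξ)
  have hcod := hCodazzi e₁ ξ
  rw [hEξ, hEe₁, hleib, hnablaξ, hEXme₁, hEnξe, hXmξ, hηe₁, hηξ, hXmη] at hcod
  simp only [smul_zero, zero_smul, zero_sub, sub_zero, sub_self, one_smul] at hcod
  -- pair with Xm e₁
  have hpair := congrArg (fun v => g v (Xm e₁)) hcod
  simp only [map_sub, map_add, map_smul, map_neg, LinearMap.sub_apply, LinearMap.add_apply,
    LinearMap.smul_apply, LinearMap.neg_apply, smul_eq_mul] at hpair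
  have hgXX : g (Xm e₁) (Xm e₁) = 1 := by
    rw [hcomp, he₁, hηe₁, mul_zero, sub_zero]
  have hgξX : g ξ (Xm e₁) = 0 := by rw [hgsym]; exact hXmη e₁
  rw [hgXX, hgξX] at hpair
  have hf' : f - 1 = -c' := by linear_combination hpair
  have hf : f = algebraMap ℝ A (1 - c) := by
    rw [map_sub, map_one, ← hc']; linear_combination hf'
  refine ⟨hf, ?_, ?_⟩
  · intro X
    rw [hE, hf', neg_mul, neg_smul, ← sub_eq_add_neg]
  · have hEξ' : g (E ξ) ξ = 1 - c' := by
      rw [hEξ, map_smul, LinearMap.smul_apply, hgξ, smul_eq_mul, mul_one, hf,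
        map_sub, map_one, ← hc']
    rw [hEe₁, hEXme₁, he₁, hgXX, hEξ', map_sub, ← hc']
    have : (algebraMap ℝ A) (3:ℝ) = (1:A) + 1 + 1 := by
      rw [show (3:ℝ) = 1+1+1 by norm_num, map_add, map_add, map_one]
    rw [this]; ring
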